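/- arXiv:1708.03608 — 10 statements merged into one kernel-verified Lean document; each statement's English description precedes it below -/
import Mathlib

section
/- If x is a k-sparse vector in R^n and A is a binary m×n matrix in which every column has exactly q ones and any two distinct columns have inner product at most r-1, then for any index j not in the support of x, the reduced measurement vector ȳ_j (the sub-vector of y = Ax consisting of the q entries y_i for rows i where A_{ij} = 1) has at most k(r-1) nonzero components. -/
open Finset

/-- If `x` is `k`-sparse and `A` is a binary matrix whose every column has
exactly `q` ones and any two distinct columns have inner product at most `r-1`, then for
`j` not in the support of `x`, the reduced measurement vector `ȳ_j` (entries of `y = Ax`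
over the rows where column `j` has a `1`) has at most `k(r-1)` nonzero components. -/
theorem stmt0 {m n q r k : ℕ}
    (A : Matrix (Fin m) (Fin n) ℝ)
    (hbin : ∀ i j, A i j = 0 ∨ A i j = 1)
    (hcol : ∀ j : Fin n, (Finset.univ.filter (fun i => A i j = 1)).card = q)
    (hip : ∀ j t : Fin n, j ≠ t → ∑ i, A i j * A i t ≤ ((r - 1 : ℕ) : ℝ))
    (x : Fin n → ℝ)
    (hx : (Finset.univ.filter (fun i => x i ≠ 0)).card ≤ k)
    (y : Fin m → ℝ) (hy : y = A.mulVec x)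
    (j : Fin n) (hj : x j = 0) :
    (Finset.univ.filter (fun i => A i j = 1 ∧ y i ≠ 0)).card ≤ k * (r - 1) := by
  classical
  set S := Finset.univ.filter (fun i => x i ≠ 0) with hS
  have hsub : (Finset.univ.filter (fun i => A i j = 1 ∧ y i ≠ 0)) ⊆
      S.biUnion (fun t => Finset.univ.filter (fun i => A i j = 1 ∧ A i t = 1)) := by
    intro i hi
    simp only [mem_filter, mem_univ, true_and] at hi
    obtain ⟨h1, h2⟩ := hi
    have hex : ∃ t, x t ≠ 0 ∧ A i t = 1 := by
      by_contra h
      push_neg at h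
      apply h2
      rw [hy]
      simp only [Matrix.mulVec, dotProduct]
      apply Finset.sum_eq_zero
      intro t _
      by_cases hxt : x t = 0
      · simp [hxt]
      · rcases hbin i t with h0 | hone
        · simp [h0]
        · exact absurd hone (h t hxt)
    obtain ⟨t, ht1, ht2⟩ := hex
    simp only [mem_biUnion, mem_filter, mem_univ, true_and]
    exact ⟨t, by simp [hS, ht1], h1, ht2⟩
  have hper : ∀ t ∈ S, (Finset.univ.filter (fun i => A i j = 1 ∧ A i t = 1)).card ≤ r - 1 := by
    intro t ht
    simp only [hS, mem_filter, mem_univ, true_and] at ht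
    have hjt : j ≠ t := fun h => ht (h ▸ hj)
    have hsum : (((Finset.univ.filter (fun i => A i j = 1 ∧ A i t = 1)).card : ℕ) : ℝ)
        = ∑ i, A i j * A i t := by
      rw [Finset.card_filter, Nat.cast_sum]
      apply Finset.sum_congr rfl
      intro i _
      rcases hbin i j with h | h <;> rcases hbin i t with h' | h' <;> simp [h, h']
    have := hip j t hjt
    rw [← hsum] at this
    exact_mod_cast this
  calc (Finset.univ.filter (fun i => A i j = 1 ∧ y i ≠ 0)).card
      ≤ (S.biUnion (fun t => Finset.univ.filter (fun i => A i j = 1 ∧ A i t = 1))).card :=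
        Finset.card_le_card hsub
    _ ≤ ∑ t ∈ S, (Finset.univ.filter (fun i => A i j = 1 ∧ A i t = 1)).card :=
        Finset.card_biUnion_le
    _ ≤ ∑ _t ∈ S, (r - 1) := Finset.sum_le_sum hper
    _ = S.card * (r - 1) := by rw [Finset.sum_const, smul_eq_mul]
    _ ≤ k * (r - 1) := Nat.mul_le_mul_right _ hx
end

section
/- If x is a k-sparse vector in R^n and A is a binary matrix satisfying the main assumption (each column has exactly q ones, distinct columns have inner product at most r-1), then for any index j in the support of x, at least q - (k-1)(r-1) components of the reduced measurement vector ȳ_j are equal to x_j. -/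
open Finset

/-- Under the main assumption, if `j` is in the support of the `k`-sparse
vector `x`, then at least `q - (k-1)(r-1)` components of the reduced measurement vector
`ȳ_j` are equal to `x j`. -/
theorem stmt1 {m n q r k : ℕ}
    (A : Matrix (Fin m) (Fin n) ℝ)
    (hbin : ∀ i j, A i j = 0 ∨ A i j = 1)
    (hcol : ∀ j : Fin n, (Finset.univ.filter (fun i => A i j = 1)).card = q)
    (hip : ∀ j t : Fin n, j ≠ t → ∑ i, A i j * A i t ≤ ((r - 1 : ℕ) : ℝ))
    (x : Fin n → ℝ)
    (hx : (Finset.univ.filter (fun i => x i ≠ 0)).card ≤ k)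
    (y : Fin m → ℝ) (hy : y = A.mulVec x)
    (j : Fin n) (hj : x j ≠ 0) :
    q - (k - 1) * (r - 1) ≤
      (Finset.univ.filter (fun i => A i j = 1 ∧ y i = x j)).card := by
  set S := Finset.univ.filter (fun i => A i j = 1) with hS
  set T := (Finset.univ.filter (fun i => x i ≠ 0)).erase j with hT
  have hTcard : T.card ≤ k - 1 := by
    rw [hT]
    have hjmem : j ∈ Finset.univ.filter (fun i => x i ≠ 0) :=
      Finset.mem_filter.mpr ⟨Finset.mem_univ j, hj⟩
    have h1 := Finset.card_erase_of_mem hjmem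
    have h2 : 1 ≤ (Finset.univ.filter (fun i => x i ≠ 0)).card :=
      Finset.card_pos.mpr ⟨j, hjmem⟩
    omega
  -- each t ∈ T gives at most r-1 rows where both columns are 1
  have hpair : ∀ t ∈ T, (S.filter (fun i => A i t = 1)).card ≤ r - 1 := by
    intro t ht
    have htj : t ≠ j := (Finset.mem_erase.mp ht).1
    have h := hip j t (Ne.symm htj)
    have hterm : ∀ i, A i j * A i t = if A i j = 1 ∧ A i t = 1 then (1:ℝ) else 0 := by
      intro i
      rcases hbin i j with h1 | h1 <;> rcases hbin i t with h2 | h2 <;>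
        simp [h1, h2]
    have hsum : ∑ i, A i j * A i t
        = ((Finset.univ.filter (fun i => A i j = 1 ∧ A i t = 1)).card : ℝ) := by
      simp only [hterm]
      rw [Finset.sum_boole]
    have hset : S.filter (fun i => A i t = 1)
        = Finset.univ.filter (fun i => A i j = 1 ∧ A i t = 1) := by
      rw [hS, Finset.filter_filter]
    rw [hset]
    have : ((Finset.univ.filter (fun i => A i j = 1 ∧ A i t = 1)).card : ℝ)
        ≤ ((r - 1 : ℕ) : ℝ) := by rw [← hsum]; exact h
    exact_mod_cast this
  -- bad rows are covered by the union over T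
  set Bad := S.filter (fun i => ¬ y i = x j) with hBad
  have hsub : Bad ⊆ T.biUnion (fun t => S.filter (fun i => A i t = 1)) := by
    intro i hi
    rw [hBad, Finset.mem_filter] at hi
    obtain ⟨hiS, hiy⟩ := hi
    have hAij : A i j = 1 := (Finset.mem_filter.mp hiS).2
    by_contra hnot
    simp only [Finset.mem_biUnion, not_exists, not_and] at hnot
    apply hiy
    have : y i = ∑ t, A i t * x t := by rw [hy]; rfl
    rw [this]
    rw [Finset.sum_eq_single j]
    · rw [hAij, one_mul]
    · intro t _ htj
      by_cases hxt : x t = 0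
      · rw [hxt, mul_zero]
      · have htT : t ∈ T := by
          rw [hT]; exact Finset.mem_erase.mpr ⟨htj, by simp [hxt]⟩
        have := hnot t htT
        rw [Finset.mem_filter] at this
        have hA0 : A i t = 0 := by
          rcases hbin i t with h0 | h1
          · exact h0
          · exact absurd ⟨hiS, h1⟩ this
        rw [hA0, zero_mul]
    · intro h; exact absurd (Finset.mem_univ j) h
  have hbadcard : Bad.card ≤ (k - 1) * (r - 1) := by
    calc Bad.card ≤ (T.biUnion (fun t => S.filter (fun i => A i t = 1))).card :=
          Finset.card_le_card hsub
      _ ≤ ∑ t ∈ T, (S.filter (fun i => A i t = 1)).card := Finset.card_biUnion_le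
      _ ≤ ∑ _t ∈ T, (r - 1) := Finset.sum_le_sum hpair
      _ = T.card * (r - 1) := by rw [Finset.sum_const, smul_eq_mul]
      _ ≤ (k - 1) * (r - 1) := Nat.mul_le_mul_right _ hTcard
  have hsplit : (S.filter (fun i => y i = x j)).card + Bad.card = S.card :=
    Finset.card_filter_add_card_filter_not _
  have hgoal : Finset.univ.filter (fun i => A i j = 1 ∧ y i = x j)
      = S.filter (fun i => y i = x j) := by
    rw [hS, Finset.filter_filter]
  rw [hgoal]
  have hq : S.card = q := hcol j
  omega
end

section
/- Suppose A is a binary matrix satisfying the main assumption with q > 2k(r-1), and x ∈ R^n is k-sparse with y = Ax. Then for every index j: j ∈ supp(x) if and only if the reduced measurement vector ȳ_j has more than q/2 nonzero components; moreover, when j ∈ supp(x), more than q/2 components of ȳ_j equal x_j, and this is the unique value attained by more than q/2 components. Consequently the decoding rule that sets x̂_j to the majority value of ȳ_j if ȳ_j has more than q/2 nonzero entries and to 0 otherwise recovers x exactly. -/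
open Finset

/-- Under the main assumption with `q > 2k(r-1)`, for each `j`:
`j ∈ supp(x)` iff more than `q/2` components of `ȳ_j` are nonzero; when `j ∈ supp(x)`,
more than `q/2` components of `ȳ_j` equal `x j`, and `x j` is the unique value attained
by more than `q/2` components.  Consequently the majority decoding rule recovers `x`. -/
theorem stmt2 {m n q r k : ℕ}
    (A : Matrix (Fin m) (Fin n) ℝ)
    (hbin : ∀ i j, A i j = 0 ∨ A i j = 1)
    (hcol : ∀ j : Fin n, (Finset.univ.filter (fun i => A i j = 1)).card = q)
    (hip : ∀ j t : Fin n, j ≠ t → ∑ i, A i j * A i t ≤ ((r - 1 : ℕ) : ℝ))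
    (hq : 2 * k * (r - 1) < q)
    (x : Fin n → ℝ)
    (hx : (Finset.univ.filter (fun i => x i ≠ 0)).card ≤ k)
    (y : Fin m → ℝ) (hy : y = A.mulVec x) :
    (∀ j : Fin n,
      (x j ≠ 0 ↔ q < 2 * (Finset.univ.filter (fun i => A i j = 1 ∧ y i ≠ 0)).card) ∧
      (x j ≠ 0 →
        q < 2 * (Finset.univ.filter (fun i => A i j = 1 ∧ y i = x j)).card ∧
        (∀ c : ℝ, q < 2 * (Finset.univ.filter (fun i => A i j = 1 ∧ y i = c)).card →
          c = x j)))
    ∧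
    (∀ xhat : Fin n → ℝ,
      (∀ j : Fin n,
        (q < 2 * (Finset.univ.filter (fun i => A i j = 1 ∧ y i ≠ 0)).card →
          q < 2 * (Finset.univ.filter (fun i => A i j = 1 ∧ y i = xhat j)).card) ∧
        (¬ q < 2 * (Finset.univ.filter (fun i => A i j = 1 ∧ y i ≠ 0)).card →
          xhat j = 0)) →
      xhat = x) := by
  classical
  rw [mul_assoc] at hq
  -- inner product bound as a cardinality bound
  have hcard_ip : ∀ j t : Fin n, j ≠ t →
      (univ.filter (fun i => A i j = 1 ∧ A i t = 1)).card ≤ r - 1 := by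
    intro j t hjt
    have h1 : ∑ i, A i j * A i t
        = ((univ.filter (fun i => A i j = 1 ∧ A i t = 1)).card : ℝ) := by
      rw [Finset.card_filter]
      push_cast
      apply Finset.sum_congr rfl
      intro i _
      rcases hbin i j with h | h <;> rcases hbin i t with h' | h' <;>
        simp [h, h']
    have h2 := hip j t hjt
    rw [h1] at h2
    exact_mod_cast h2
  -- bad rows bound
  have hbad : ∀ j : Fin n,
      (univ.filter (fun i => A i j = 1 ∧ y i ≠ x j)).card ≤ k * (r - 1) := by
    intro j
    set S : Finset (Fin n) := univ.filter (fun t => x t ≠ 0) with hS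
    have hsub : univ.filter (fun i => A i j = 1 ∧ y i ≠ x j) ⊆
        (S.erase j).biUnion (fun t => univ.filter (fun i => A i j = 1 ∧ A i t = 1)) := by
      intro i hi
      simp only [mem_filter, mem_univ, true_and] at hi
      obtain ⟨hij, hne⟩ := hi
      by_contra hc
      apply hne
      rw [hy]
      show ∑ t, A i t * x t = x j
      rw [Finset.sum_eq_single j]
      · rw [hij, one_mul]
      · intro t _ htj
        by_cases hxt : x t = 0
        · simp [hxt]
        · have htS : t ∈ S := by simp [hS, hxt]
          rcases hbin i t with h | h
          · simp [h]
          · exact absurd (Finset.mem_biUnion.mpr ⟨t, Finset.mem_erase.mpr ⟨htj, htS⟩,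
              Finset.mem_filter.mpr ⟨mem_univ i, hij, h⟩⟩) hc
      · intro h; exact absurd (mem_univ j) h
    calc (univ.filter (fun i => A i j = 1 ∧ y i ≠ x j)).card
        ≤ ((S.erase j).biUnion
            (fun t => univ.filter (fun i => A i j = 1 ∧ A i t = 1))).card :=
          Finset.card_le_card hsub
      _ ≤ ∑ t ∈ S.erase j, (univ.filter (fun i => A i j = 1 ∧ A i t = 1)).card :=
          Finset.card_biUnion_le
      _ ≤ ∑ _t ∈ S.erase j, (r - 1) := by
          apply Finset.sum_le_sum
          intro t ht
          have htj : t ≠ j := (Finset.mem_erase.mp ht).1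
          exact hcard_ip j t (Ne.symm htj)
      _ = (S.erase j).card * (r - 1) := by rw [Finset.sum_const, smul_eq_mul]
      _ ≤ k * (r - 1) := by
          apply Nat.mul_le_mul_right
          exact le_trans (Finset.card_le_card (Finset.erase_subset _ _)) hx
  -- good rows: more than q/2 rows have y i = x j
  have key : ∀ j : Fin n,
      q < 2 * (univ.filter (fun i => A i j = 1 ∧ y i = x j)).card := by
    intro j
    have hsplit := Finset.card_filter_add_card_filter_not
      (s := univ.filter (fun i => A i j = 1)) (p := fun i => y i = x j)
    rw [Finset.filter_filter, Finset.filter_filter, hcol j] at hsplit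
    have hb := hbad j
    simp only [ne_eq] at hb hsplit
    omega
  -- the per-index statement
  have part1 : ∀ j : Fin n,
      (x j ≠ 0 ↔ q < 2 * (Finset.univ.filter (fun i => A i j = 1 ∧ y i ≠ 0)).card) ∧
      (x j ≠ 0 →
        q < 2 * (Finset.univ.filter (fun i => A i j = 1 ∧ y i = x j)).card ∧
        (∀ c : ℝ, q < 2 * (Finset.univ.filter (fun i => A i j = 1 ∧ y i = c)).card →
          c = x j)) := by
    intro j
    have huniq : ∀ c : ℝ,
        q < 2 * (Finset.univ.filter (fun i => A i j = 1 ∧ y i = c)).card → c = x j := by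
      intro c hc
      by_contra hne
      have hdisj : Disjoint (univ.filter (fun i => A i j = 1 ∧ y i = c))
          (univ.filter (fun i => A i j = 1 ∧ y i = x j)) := by
        rw [Finset.disjoint_left]
        intro i hi hi'
        simp only [mem_filter] at hi hi'
        exact hne (hi.2.2 ▸ hi'.2.2 ▸ rfl)
      have hsub : (univ.filter (fun i => A i j = 1 ∧ y i = c)) ∪
          (univ.filter (fun i => A i j = 1 ∧ y i = x j)) ⊆
          univ.filter (fun i => A i j = 1) := by
        intro i hi
        rcases Finset.mem_union.mp hi with h | h <;>
          simp only [mem_filter] at h ⊢ <;> exact ⟨h.1, h.2.1⟩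
      have := Finset.card_le_card hsub
      rw [Finset.card_union_of_disjoint hdisj, hcol j] at this
      have hk := key j
      omega
    refine ⟨⟨?_, ?_⟩, fun hxj => ⟨key j, huniq⟩⟩
    · intro hxj
      have hsub : (univ.filter (fun i => A i j = 1 ∧ y i = x j)) ⊆
          (univ.filter (fun i => A i j = 1 ∧ y i ≠ 0)) := by
        intro i hi
        simp only [mem_filter] at hi ⊢
        exact ⟨hi.1, hi.2.1, hi.2.2 ▸ hxj⟩
      exact lt_of_lt_of_le (key j)
        (Nat.mul_le_mul_left 2 (Finset.card_le_card hsub))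
    · intro hlt
      by_contra hxj
      have hsub : (univ.filter (fun i => A i j = 1 ∧ y i ≠ 0)) ⊆
          (univ.filter (fun i => A i j = 1 ∧ y i ≠ x j)) := by
        intro i hi
        simp only [mem_filter] at hi ⊢
        exact ⟨hi.1, hi.2.1, fun h => hi.2.2 (h.trans hxj)⟩
      have := le_trans (Finset.card_le_card hsub) (hbad j)
      omega
  refine ⟨part1, ?_⟩
  intro xhat h
  funext j
  obtain ⟨h1, h2⟩ := h j
  obtain ⟨hiff, hrest⟩ := part1 j
  by_cases hxj : x j = 0
  · have hnlt : ¬ q < 2 * (univ.filter (fun i => A i j = 1 ∧ y i ≠ 0)).card := by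
      intro hlt
      exact (hiff.mpr hlt) hxj
    rw [h2 hnlt, hxj]
  · have hlt := hiff.mp hxj
    exact (hrest hxj).2 (xhat j) (h1 hlt)
end

section
/- Suppose A is binary satisfying the main assumption, x ∈ R^n is k-sparse, and y = Ax + η where η ∈ R^m has at most M nonzero components. Then: (1) if j ∉ supp(x), ȳ_j has at most k(r-1) + M nonzero components; (2) if j ∈ supp(x), at least q - (k-1)(r-1) - M components of ȳ_j equal x_j. -/
open Finset

/-- With the main assumption, `x` `k`-sparse and `y = Ax + η` where `η` has
at most `M` nonzero components: (1) if `j ∉ supp(x)`, then `ȳ_j` has at most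
`k(r-1) + M` nonzero components; (2) if `j ∈ supp(x)`, then at least
`q - (k-1)(r-1) - M` components of `ȳ_j` equal `x j`. -/
theorem stmt3 {m n q r k M : ℕ}
    (A : Matrix (Fin m) (Fin n) ℝ)
    (hbin : ∀ i j, A i j = 0 ∨ A i j = 1)
    (hcol : ∀ j : Fin n, (Finset.univ.filter (fun i => A i j = 1)).card = q)
    (hip : ∀ j t : Fin n, j ≠ t → ∑ i, A i j * A i t ≤ ((r - 1 : ℕ) : ℝ))
    (x : Fin n → ℝ)
    (hx : (Finset.univ.filter (fun i => x i ≠ 0)).card ≤ k)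
    (η : Fin m → ℝ)
    (hη : (Finset.univ.filter (fun i => η i ≠ 0)).card ≤ M)
    (y : Fin m → ℝ) (hy : y = A.mulVec x + η) :
    (∀ j : Fin n, x j = 0 →
      (Finset.univ.filter (fun i => A i j = 1 ∧ y i ≠ 0)).card ≤ k * (r - 1) + M)
    ∧
    (∀ j : Fin n, x j ≠ 0 →
      q - ((k - 1) * (r - 1) + M) ≤
        (Finset.univ.filter (fun i => A i j = 1 ∧ y i = x j)).card) := by
  have hyi : ∀ i, y i = ∑ t, A i t * x t + η i := by
    intro i
    rw [hy]
    rfl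
  -- key: intersection of supports of two distinct columns has card ≤ r - 1
  have key : ∀ j t : Fin n, j ≠ t →
      (Finset.univ.filter (fun i => A i j = 1 ∧ A i t = 1)).card ≤ r - 1 := by
    intro j t hjt
    have h1 : ((Finset.univ.filter (fun i => A i j = 1 ∧ A i t = 1)).card : ℝ)
        = ∑ i, A i j * A i t := by
      rw [Finset.card_filter]
      push_cast
      refine Finset.sum_congr rfl fun i _ => ?_
      rcases hbin i j with h | h <;> rcases hbin i t with h' | h' <;>
        simp [h, h']
    have h2 := hip j t hjt
    rw [← h1] at h2
    exact_mod_cast h2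
  constructor
  · intro j hj
    have hsub : Finset.univ.filter (fun i => A i j = 1 ∧ y i ≠ 0) ⊆
        ((Finset.univ.filter (fun i => x i ≠ 0)).biUnion
          (fun t => Finset.univ.filter (fun i => A i j = 1 ∧ A i t = 1))) ∪
        Finset.univ.filter (fun i => η i ≠ 0) := by
      intro i hi
      simp only [mem_filter, mem_univ, true_and] at hi
      obtain ⟨hAij, hyne⟩ := hi
      by_cases hηi : η i = 0
      · have hsum : ∑ t, A i t * x t ≠ 0 := by
          intro h
          exact hyne (by rw [hyi i, h, hηi, add_zero])
        obtain ⟨t, -, hne⟩ := Finset.exists_ne_zero_of_sum_ne_zero hsum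
        have hxt : x t ≠ 0 := fun h => hne (by simp [h])
        have hAit : A i t = 1 := (hbin i t).resolve_left (fun h => hne (by simp [h]))
        simp only [mem_union, mem_biUnion, mem_filter, mem_univ, true_and]
        exact Or.inl ⟨t, hxt, hAij, hAit⟩
      · simp only [mem_union, mem_filter, mem_univ, true_and]
        exact Or.inr hηi
    calc (Finset.univ.filter (fun i => A i j = 1 ∧ y i ≠ 0)).card
        ≤ _ := Finset.card_le_card hsub
      _ ≤ ((Finset.univ.filter (fun i => x i ≠ 0)).biUnion
            (fun t => Finset.univ.filter (fun i => A i j = 1 ∧ A i t = 1))).card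
          + (Finset.univ.filter (fun i => η i ≠ 0)).card := Finset.card_union_le _ _
      _ ≤ k * (r - 1) + M := by
          refine add_le_add ?_ hη
          calc ((Finset.univ.filter (fun i => x i ≠ 0)).biUnion
                (fun t => Finset.univ.filter (fun i => A i j = 1 ∧ A i t = 1))).card
              ≤ ∑ t ∈ Finset.univ.filter (fun i => x i ≠ 0),
                  (Finset.univ.filter (fun i => A i j = 1 ∧ A i t = 1)).card :=
                Finset.card_biUnion_le
            _ ≤ ∑ _t ∈ Finset.univ.filter (fun i => x i ≠ 0), (r - 1) := by
                refine Finset.sum_le_sum fun t ht => ?_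
                simp only [mem_filter, mem_univ, true_and] at ht
                have hjt : j ≠ t := fun h => ht (h ▸ hj)
                exact key j t hjt
            _ = (Finset.univ.filter (fun i => x i ≠ 0)).card * (r - 1) := by
                rw [Finset.sum_const, smul_eq_mul]
            _ ≤ k * (r - 1) := Nat.mul_le_mul_right _ hx
  · intro j hj
    set Q := Finset.univ.filter (fun i => A i j = 1) with hQ
    set G := Finset.univ.filter (fun i => A i j = 1 ∧ y i = x j) with hG
    have hGQ : G ⊆ Q := by
      intro i hi
      simp only [hG, hQ, mem_filter, mem_univ, true_and] at hi ⊢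
      exact hi.1
    have hbad : Q \ G ⊆
        (((Finset.univ.filter (fun i => x i ≠ 0)).erase j).biUnion
          (fun t => Finset.univ.filter (fun i => A i j = 1 ∧ A i t = 1))) ∪
        Finset.univ.filter (fun i => η i ≠ 0) := by
      intro i hi
      simp only [hQ, hG, mem_sdiff, mem_filter, mem_univ, true_and, not_and] at hi
      obtain ⟨hAij, hyne⟩ := hi
      have hyne := hyne hAij
      by_cases hηi : η i = 0
      · have hsum : ∑ t ∈ Finset.univ.erase j, A i t * x t ≠ 0 := by
          intro h
          apply hyne
          rw [hyi i, hηi, add_zero, ← Finset.add_sum_erase Finset.univ _ (mem_univ j),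
            h, add_zero, hAij, one_mul]
        obtain ⟨t, htmem, hne⟩ := Finset.exists_ne_zero_of_sum_ne_zero hsum
        have htj : t ≠ j := (Finset.mem_erase.mp htmem).1
        have hxt : x t ≠ 0 := fun h => hne (by simp [h])
        have hAit : A i t = 1 := (hbin i t).resolve_left (fun h => hne (by simp [h]))
        simp only [mem_union, mem_biUnion, mem_erase, mem_filter, mem_univ, true_and]
        exact Or.inl ⟨t, ⟨htj, hxt⟩, hAij, hAit⟩
      · simp only [mem_union, mem_filter, mem_univ, true_and]
        exact Or.inr hηi
    have hbadcard : (Q \ G).card ≤ (k - 1) * (r - 1) + M := by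
      calc (Q \ G).card ≤ _ := Finset.card_le_card hbad
        _ ≤ (((Finset.univ.filter (fun i => x i ≠ 0)).erase j).biUnion
              (fun t => Finset.univ.filter (fun i => A i j = 1 ∧ A i t = 1))).card
            + (Finset.univ.filter (fun i => η i ≠ 0)).card := Finset.card_union_le _ _
        _ ≤ (k - 1) * (r - 1) + M := by
            refine add_le_add ?_ hη
            calc (((Finset.univ.filter (fun i => x i ≠ 0)).erase j).biUnion
                  (fun t => Finset.univ.filter (fun i => A i j = 1 ∧ A i t = 1))).card
                ≤ ∑ t ∈ (Finset.univ.filter (fun i => x i ≠ 0)).erase j,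
                    (Finset.univ.filter (fun i => A i j = 1 ∧ A i t = 1)).card :=
                  Finset.card_biUnion_le
              _ ≤ ∑ _t ∈ (Finset.univ.filter (fun i => x i ≠ 0)).erase j, (r - 1) := by
                  refine Finset.sum_le_sum fun t ht => ?_
                  exact key j t (Ne.symm (Finset.mem_erase.mp ht).1)
              _ = ((Finset.univ.filter (fun i => x i ≠ 0)).erase j).card * (r - 1) := by
                  rw [Finset.sum_const, smul_eq_mul]
              _ ≤ (k - 1) * (r - 1) := by
                  refine Nat.mul_le_mul_right _ ?_
                  rw [Finset.card_erase_of_mem (by simp [hj])]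
                  exact Nat.sub_le_sub_right hx 1
    have hsplit : (Q \ G).card + G.card = Q.card := Finset.card_sdiff_add_card_eq_card hGQ
    have hQcard : Q.card = q := hcol j
    omega
end

section
/- Suppose A is binary satisfying the main assumption with q > 2[k(r-1) + M], x ∈ R^n is k-sparse, and y = Ax + η with ‖η‖_0 ≤ M. Then for each j, j ∈ supp(x) if and only if more than q/2 components of ȳ_j are nonzero, and if j ∈ supp(x), the unique value attained by more than q/2 components of ȳ_j is x_j; hence the majority-decoding algorithm recovers x exactly despite arbitrary-magnitude corruption of up to M measurements. -/
open Finset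

/-- Under the main assumption with `q > 2(k(r-1)+M)`, with `y = Ax + η`,
`‖η‖₀ ≤ M`: for each `j`, `j ∈ supp(x)` iff more than `q/2` components of `ȳ_j` are
nonzero; when `j ∈ supp(x)`, the unique value attained by more than `q/2` components of
`ȳ_j` is `x j`.  Hence majority decoding recovers `x` exactly despite corruption of up
to `M` measurements of arbitrary magnitude. -/
theorem stmt4 {m n q r k M : ℕ}
    (A : Matrix (Fin m) (Fin n) ℝ)
    (hbin : ∀ i j, A i j = 0 ∨ A i j = 1)
    (hcol : ∀ j : Fin n, (Finset.univ.filter (fun i => A i j = 1)).card = q)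
    (hip : ∀ j t : Fin n, j ≠ t → ∑ i, A i j * A i t ≤ ((r - 1 : ℕ) : ℝ))
    (hq : 2 * (k * (r - 1) + M) < q)
    (x : Fin n → ℝ)
    (hx : (Finset.univ.filter (fun i => x i ≠ 0)).card ≤ k)
    (η : Fin m → ℝ)
    (hη : (Finset.univ.filter (fun i => η i ≠ 0)).card ≤ M)
    (y : Fin m → ℝ) (hy : y = A.mulVec x + η) :
    (∀ j : Fin n,
      (x j ≠ 0 ↔ q < 2 * (Finset.univ.filter (fun i => A i j = 1 ∧ y i ≠ 0)).card) ∧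
      (x j ≠ 0 →
        q < 2 * (Finset.univ.filter (fun i => A i j = 1 ∧ y i = x j)).card ∧
        (∀ c : ℝ, q < 2 * (Finset.univ.filter (fun i => A i j = 1 ∧ y i = c)).card →
          c = x j)))
    ∧
    (∀ xhat : Fin n → ℝ,
      (∀ j : Fin n,
        (q < 2 * (Finset.univ.filter (fun i => A i j = 1 ∧ y i ≠ 0)).card →
          q < 2 * (Finset.univ.filter (fun i => A i j = 1 ∧ y i = xhat j)).card) ∧
        (¬ q < 2 * (Finset.univ.filter (fun i => A i j = 1 ∧ y i ≠ 0)).card →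
          xhat j = 0)) →
      xhat = x) := by
  -- pairwise column intersection bound
  have hpair : ∀ j t : Fin n, t ≠ j →
      (univ.filter (fun i => A i j = 1 ∧ A i t = 1)).card ≤ r - 1 := by
    intro j t ht
    have hsum : ∑ i, A i j * A i t
        = ((univ.filter (fun i => A i j = 1 ∧ A i t = 1)).card : ℝ) := by
      rw [← Finset.sum_filter_add_sum_filter_not univ (fun i => A i j = 1 ∧ A i t = 1)]
      have h1 : ∑ i ∈ univ.filter (fun i => A i j = 1 ∧ A i t = 1), A i j * A i t
          = ((univ.filter (fun i => A i j = 1 ∧ A i t = 1)).card : ℝ) := by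
        rw [Finset.card_eq_sum_ones, Nat.cast_sum]
        refine Finset.sum_congr rfl fun i hi => ?_
        simp only [mem_filter] at hi
        simp [hi.2.1, hi.2.2]
      have h2 : ∑ i ∈ univ.filter (fun i => ¬(A i j = 1 ∧ A i t = 1)), A i j * A i t = 0 := by
        refine Finset.sum_eq_zero fun i hi => ?_
        simp only [mem_filter, not_and_or] at hi
        rcases hi.2 with h | h
        · rcases hbin i j with h0 | h1
          · simp [h0]
          · exact absurd h1 h
        · rcases hbin i t with h0 | h1
          · simp [h0]
          · exact absurd h1 h
      rw [h1, h2, add_zero]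
    have := hip j t (Ne.symm ht)
    rw [hsum] at this
    exact_mod_cast this
  -- bad-row count
  have hbad : ∀ j : Fin n,
      (univ.filter (fun i => A i j = 1 ∧ y i ≠ x j)).card ≤ k * (r - 1) + M := by
    intro j
    set T := (univ.filter (fun t => x t ≠ 0)).erase j with hT
    have hsub : univ.filter (fun i => A i j = 1 ∧ y i ≠ x j) ⊆
        (T.biUnion fun t => univ.filter (fun i => A i j = 1 ∧ A i t = 1)) ∪
          univ.filter (fun i => η i ≠ 0) := by
      intro i hi
      simp only [mem_filter, mem_univ, true_and] at hi
      obtain ⟨hij, hyi⟩ := hi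
      by_cases hηi : η i = 0
      · have hmv : A.mulVec x i ≠ x j := by
          intro h; apply hyi; rw [hy]; simp [h, hηi]
        have h2 : ∑ t ∈ univ.erase j, A i t * x t ≠ 0 := by
          intro h0
          apply hmv
          rw [Matrix.mulVec, dotProduct,
            ← Finset.add_sum_erase univ (fun t => A i t * x t) (mem_univ j), h0, add_zero,
            hij, one_mul]
        obtain ⟨t, ht, hne⟩ := Finset.exists_ne_zero_of_sum_ne_zero h2
        have htj : t ≠ j := (Finset.mem_erase.mp ht).1
        have hxt : x t ≠ 0 := fun h => hne (by simp [h])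
        have hAt : A i t = 1 := by
          rcases hbin i t with h0 | h1
          · exact absurd (by simp [h0]) hne
          · exact h1
        refine Finset.mem_union_left _ ?_
        refine Finset.mem_biUnion.mpr ⟨t, ?_, ?_⟩
        · exact Finset.mem_erase.mpr ⟨htj, by simp [hxt]⟩
        · simp [hij, hAt]
      · exact Finset.mem_union_right _ (by simp [hηi])
    calc (univ.filter (fun i => A i j = 1 ∧ y i ≠ x j)).card
        ≤ ((T.biUnion fun t => univ.filter (fun i => A i j = 1 ∧ A i t = 1)) ∪
            univ.filter (fun i => η i ≠ 0)).card := Finset.card_le_card hsub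
      _ ≤ (T.biUnion fun t => univ.filter (fun i => A i j = 1 ∧ A i t = 1)).card +
            (univ.filter (fun i => η i ≠ 0)).card := Finset.card_union_le _ _
      _ ≤ (∑ t ∈ T, (univ.filter (fun i => A i j = 1 ∧ A i t = 1)).card) + M :=
            Nat.add_le_add (Finset.card_biUnion_le) hη
      _ ≤ (∑ _t ∈ T, (r - 1)) + M := by
            refine Nat.add_le_add_right (Finset.sum_le_sum fun t ht => ?_) M
            exact hpair j t (Finset.mem_erase.mp ht).1
      _ = T.card * (r - 1) + M := by rw [Finset.sum_const, smul_eq_mul]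
      _ ≤ k * (r - 1) + M := by
            refine Nat.add_le_add_right (Nat.mul_le_mul_right _ ?_) M
            exact le_trans (Finset.card_le_card (Finset.erase_subset _ _)) hx
  -- good-row count
  have hsplit : ∀ j : Fin n,
      (univ.filter (fun i => A i j = 1 ∧ y i = x j)).card +
      (univ.filter (fun i => A i j = 1 ∧ y i ≠ x j)).card = q := by
    intro j
    rw [← hcol j]
    rw [show (univ.filter (fun i => A i j = 1 ∧ y i = x j))
        = (univ.filter (fun i => A i j = 1)).filter (fun i => y i = x j) by
          rw [Finset.filter_filter],
      show (univ.filter (fun i => A i j = 1 ∧ y i ≠ x j))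
        = (univ.filter (fun i => A i j = 1)).filter (fun i => ¬ y i = x j) by
          rw [Finset.filter_filter]]
    exact Finset.card_filter_add_card_filter_not _
  have hgood : ∀ j : Fin n,
      q < 2 * (univ.filter (fun i => A i j = 1 ∧ y i = x j)).card := by
    intro j
    have := hbad j
    have := hsplit j
    omega
  -- uniqueness of majority value
  have huniq : ∀ (j : Fin n) (c d : ℝ),
      q < 2 * (univ.filter (fun i => A i j = 1 ∧ y i = c)).card →
      q < 2 * (univ.filter (fun i => A i j = 1 ∧ y i = d)).card → c = d := by
    intro j c d hc hd
    by_contra hne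
    have hdisj : Disjoint (univ.filter (fun i => A i j = 1 ∧ y i = c))
        (univ.filter (fun i => A i j = 1 ∧ y i = d)) := by
      refine Finset.disjoint_left.mpr fun i hi hi' => ?_
      simp only [mem_filter] at hi hi'
      exact hne (hi.2.2 ▸ hi'.2.2 ▸ rfl)
    have hsub : (univ.filter (fun i => A i j = 1 ∧ y i = c)) ∪
        (univ.filter (fun i => A i j = 1 ∧ y i = d)) ⊆ univ.filter (fun i => A i j = 1) := by
      intro i hi
      rcases Finset.mem_union.mp hi with h | h <;>
        · simp only [mem_filter] at h ⊢; exact ⟨h.1, h.2.1⟩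
    have := Finset.card_le_card hsub
    rw [Finset.card_union_of_disjoint hdisj, hcol j] at this
    omega
  have main : ∀ j : Fin n,
      (x j ≠ 0 ↔ q < 2 * (univ.filter (fun i => A i j = 1 ∧ y i ≠ 0)).card) ∧
      (x j ≠ 0 →
        q < 2 * (univ.filter (fun i => A i j = 1 ∧ y i = x j)).card ∧
        (∀ c : ℝ, q < 2 * (univ.filter (fun i => A i j = 1 ∧ y i = c)).card → c = x j)) := by
    intro j
    constructor
    · constructor
      · intro hxj
        have hsub : univ.filter (fun i => A i j = 1 ∧ y i = x j) ⊆
            univ.filter (fun i => A i j = 1 ∧ y i ≠ 0) := by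
          intro i hi
          simp only [mem_filter] at hi ⊢
          exact ⟨hi.1, hi.2.1, hi.2.2 ▸ hxj⟩
        exact lt_of_lt_of_le (hgood j)
          (Nat.mul_le_mul_left 2 (Finset.card_le_card hsub))
      · intro hlt
        by_contra hxj
        have heq : univ.filter (fun i => A i j = 1 ∧ y i ≠ 0)
            = univ.filter (fun i => A i j = 1 ∧ y i ≠ x j) := by
          simp [hxj]
        rw [heq] at hlt
        have := hbad j
        omega
    · intro hxj
      exact ⟨hgood j, fun c hc => huniq j c (x j) hc (hgood j)⟩
  refine ⟨main, ?_⟩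
  intro xhat hxhat
  funext j
  by_cases hxj : x j = 0
  · have h1 := (main j).1
    have : ¬ q < 2 * (univ.filter (fun i => A i j = 1 ∧ y i ≠ 0)).card := fun h =>
      (h1.mpr h) hxj
    rw [(hxhat j).2 this, hxj]
  · have hlt := (main j).1.mp hxj
    have h2 := (hxhat j).1 hlt
    exact huniq j (xhat j) (x j) h2 (hgood j)
end

section
/- Suppose A satisfies the main assumption with q > 2k(r-1), and x = x_d + x_r where x_d is k-sparse and ‖x_r‖_1 ≤ δ. Let u = A x_d and y = Ax. Then for j ∉ supp(x_d), at most k(r-1) components of ȳ_j have magnitude greater than δ, and for j ∈ supp(x_d), at least q - (k-1)(r-1) components of ȳ_j lie in the interval [(x_d)_j - δ, (x_d)_j + δ]. -/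
open Finset

/-- Under the main assumption with `q > 2k(r-1)`, if `x = x_d + x_r` with
`x_d` `k`-sparse and `‖x_r‖₁ ≤ δ`, and `y = Ax`, then: for `j ∉ supp(x_d)` at most
`k(r-1)` components of `ȳ_j` have magnitude greater than `δ`, and for `j ∈ supp(x_d)`
at least `q - (k-1)(r-1)` components of `ȳ_j` lie in `[(x_d)_j - δ, (x_d)_j + δ]`. -/
theorem stmt6 {m n q r k : ℕ}
    (A : Matrix (Fin m) (Fin n) ℝ)
    (hbin : ∀ i j, A i j = 0 ∨ A i j = 1)
    (hcol : ∀ j : Fin n, (Finset.univ.filter (fun i => A i j = 1)).card = q)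
    (hip : ∀ j t : Fin n, j ≠ t → ∑ i, A i j * A i t ≤ ((r - 1 : ℕ) : ℝ))
    (hq : 2 * k * (r - 1) < q)
    (δ : ℝ)
    (x xd xr : Fin n → ℝ) (hsplit : x = xd + xr)
    (hxd : (Finset.univ.filter (fun i => xd i ≠ 0)).card ≤ k)
    (hxr : ∑ i, |xr i| ≤ δ)
    (y : Fin m → ℝ) (hy : y = A.mulVec x) :
    (∀ j : Fin n, xd j = 0 →
      (Finset.univ.filter (fun i => A i j = 1 ∧ δ < |y i|)).card ≤ k * (r - 1))
    ∧
    (∀ j : Fin n, xd j ≠ 0 →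
      q - (k - 1) * (r - 1) ≤
        (Finset.univ.filter
          (fun i => A i j = 1 ∧ xd j - δ ≤ y i ∧ y i ≤ xd j + δ)).card) := by
  classical
  have hres : ∀ i, |A.mulVec xr i| ≤ δ := by
    intro i
    calc |A.mulVec xr i| = |∑ t, A i t * xr t| := rfl
      _ ≤ ∑ t, |A i t * xr t| := Finset.abs_sum_le_sum_abs _ _
      _ ≤ ∑ t, |xr t| := by
          apply Finset.sum_le_sum
          intro t _
          rw [abs_mul]
          rcases hbin i t with h | h <;> simp [h, abs_nonneg]
      _ ≤ δ := hxr
  have hy' : ∀ i, y i = A.mulVec xd i + A.mulVec xr i := by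
    intro i
    rw [hy, hsplit, Matrix.mulVec_add]
    rfl
  have hpair : ∀ j t : Fin n, j ≠ t →
      (univ.filter (fun i => A i j = 1 ∧ A i t = 1)).card ≤ r - 1 := by
    intro j t hjt
    have h1 : ((univ.filter (fun i => A i j = 1 ∧ A i t = 1)).card : ℝ)
        = ∑ i, A i j * A i t := by
      rw [Finset.card_filter]
      push_cast
      apply Finset.sum_congr rfl
      intro i _
      rcases hbin i j with h | h <;> rcases hbin i t with h' | h' <;> simp [h, h']
    have h2 := hip j t hjt
    rw [← h1] at h2
    exact_mod_cast h2
  set S := univ.filter (fun i => xd i ≠ 0) with hS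
  constructor
  · intro j hj
    have hsub : univ.filter (fun i => A i j = 1 ∧ δ < |y i|) ⊆
        S.biUnion (fun t => univ.filter (fun i => A i j = 1 ∧ A i t = 1)) := by
      intro i hi
      simp only [mem_filter, mem_univ, true_and] at hi
      have hu : A.mulVec xd i ≠ 0 := by
        intro h0
        have h1 := hres i
        have h2 := hy' i
        rw [h0, zero_add] at h2
        rw [← h2] at h1
        exact absurd h1 (not_le.mpr hi.2)
      obtain ⟨t, ht⟩ : ∃ t, A i t * xd t ≠ 0 := by
        by_contra h
        push_neg at h
        apply hu
        show ∑ t, A i t * xd t = 0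
        exact Finset.sum_eq_zero fun t _ => h t
      have hAt : A i t = 1 := by
        rcases hbin i t with h | h
        · exact absurd (by rw [h, zero_mul]) ht
        · exact h
      have hxt : xd t ≠ 0 := fun h => ht (by rw [h, mul_zero])
      have htS : t ∈ S := by simp [hS, hxt]
      simp only [mem_biUnion, mem_filter, mem_univ, true_and]
      exact ⟨t, htS, hi.1, hAt⟩
    calc (univ.filter (fun i => A i j = 1 ∧ δ < |y i|)).card
        ≤ (S.biUnion (fun t => univ.filter (fun i => A i j = 1 ∧ A i t = 1))).card :=
          Finset.card_le_card hsub
      _ ≤ ∑ t ∈ S, (univ.filter (fun i => A i j = 1 ∧ A i t = 1)).card :=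
          Finset.card_biUnion_le
      _ ≤ ∑ _t ∈ S, (r - 1) := by
          apply Finset.sum_le_sum
          intro t htS
          apply hpair
          intro h
          rw [h] at hj
          exact (Finset.mem_filter.mp htS).2 hj
      _ = S.card * (r - 1) := by rw [Finset.sum_const, smul_eq_mul]
      _ ≤ k * (r - 1) := Nat.mul_le_mul_right _ hxd
  · intro j hj
    set B := univ.filter (fun i => A i j = 1 ∧ ∃ t ∈ S.erase j, A i t = 1) with hB
    set G := univ.filter (fun i => A i j = 1 ∧ xd j - δ ≤ y i ∧ y i ≤ xd j + δ) with hG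
    have hsub : univ.filter (fun i => A i j = 1) ⊆ G ∪ B := by
      intro i hi
      simp only [mem_filter, mem_univ, true_and] at hi
      by_cases hex : ∃ t ∈ S.erase j, A i t = 1
      · apply Finset.mem_union_right
        simp only [hB, mem_filter, mem_univ, true_and]
        exact ⟨hi, hex⟩
      · push_neg at hex
        have hu : A.mulVec xd i = xd j := by
          show ∑ t, A i t * xd t = xd j
          rw [Finset.sum_eq_single j]
          · rw [hi, one_mul]
          · intro t _ htj
            by_cases hxt : xd t = 0
            · rw [hxt, mul_zero]
            · have htS : t ∈ S.erase j := by
                simp [hS, Finset.mem_erase, htj, hxt]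
              rcases hbin i t with h | h
              · rw [h, zero_mul]
              · exact absurd h (hex t htS)
          · intro h
            exact absurd (Finset.mem_univ j) h
        have h1 := hres i
        have h2 := hy' i
        rw [hu] at h2
        rw [abs_le] at h1
        apply Finset.mem_union_left
        simp only [hG, mem_filter, mem_univ, true_and]
        refine ⟨hi, ?_, ?_⟩ <;> rw [h2] <;> linarith [h1.1, h1.2]
    have hBcard : B.card ≤ (k - 1) * (r - 1) := by
      have hsubB : B ⊆ (S.erase j).biUnion
          (fun t => univ.filter (fun i => A i j = 1 ∧ A i t = 1)) := by
        intro i hi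
        simp only [hB, mem_filter, mem_univ, true_and] at hi
        obtain ⟨t, htS, hAt⟩ := hi.2
        simp only [mem_biUnion, mem_filter, mem_univ, true_and]
        exact ⟨t, htS, hi.1, hAt⟩
      calc B.card ≤ ((S.erase j).biUnion
            (fun t => univ.filter (fun i => A i j = 1 ∧ A i t = 1))).card :=
            Finset.card_le_card hsubB
        _ ≤ ∑ t ∈ S.erase j, (univ.filter (fun i => A i j = 1 ∧ A i t = 1)).card :=
            Finset.card_biUnion_le
        _ ≤ ∑ _t ∈ S.erase j, (r - 1) := by
            apply Finset.sum_le_sum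
            intro t htS
            exact hpair j t (Ne.symm (Finset.mem_erase.mp htS).1)
        _ = (S.erase j).card * (r - 1) := by rw [Finset.sum_const, smul_eq_mul]
        _ ≤ (k - 1) * (r - 1) := by
            apply Nat.mul_le_mul_right
            have hjS : j ∈ S := by simp [hS, hj]
            have := Finset.card_erase_of_mem hjS
            rw [this]
            exact Nat.sub_le_sub_right hxd 1
    have hq' : q ≤ G.card + (k - 1) * (r - 1) := by
      calc q = (univ.filter (fun i => A i j = 1)).card := (hcol j).symm
        _ ≤ (G ∪ B).card := Finset.card_le_card hsub
        _ ≤ G.card + B.card := Finset.card_union_le _ _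
        _ ≤ G.card + (k - 1) * (r - 1) := Nat.add_le_add_left hBcard _
    omega
end

section
/- Let A ∈ {0,1}^{m×n} with each column having exactly q ones and any two distinct columns having inner product at most r-1. Then for any set S of columns with |S| = s, the s×s Gram matrix G = A_S^T A_S has diagonal entries equal to q and off-diagonal entries bounded by r-1; hence by Gershgorin's theorem every eigenvalue of G lies in [q - (s-1)(r-1), q + (s-1)(r-1)]. Consequently the column-normalized matrix A' = (1/√q)A satisfies the restricted isometry property of order k with constant δ_k ≤ (k-1)(r-1)/q: that is, (1 - δ_k)‖u‖² ≤ ‖A'u‖² ≤ (1 + δ_k)‖u‖² for all k-sparse u. -/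
open Finset

lemma expand_aux {m n : ℕ} (A : Matrix (Fin m) (Fin n) ℝ) (u : Fin n → ℝ) :
    ∑ i, (A.mulVec u i)^2 = ∑ j, ∑ l, u j * u l * (∑ i, A i j * A i l) := by
  simp only [Matrix.mulVec, dotProduct, sq]
  calc ∑ i, (∑ j, A i j * u j) * (∑ j, A i j * u j)
      = ∑ i, ∑ j, ∑ l, (A i j * u j) * (A i l * u l) := by
        refine Finset.sum_congr rfl fun i _ => ?_
        rw [Finset.sum_mul_sum]
    _ = ∑ j, ∑ l, ∑ i, (A i j * u j) * (A i l * u l) := by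
        rw [Finset.sum_comm]
        exact Finset.sum_congr rfl fun j _ => Finset.sum_comm
    _ = ∑ j, ∑ l, u j * u l * (∑ i, A i j * A i l) := by
        refine Finset.sum_congr rfl fun j _ => Finset.sum_congr rfl fun l _ => ?_
        rw [Finset.mul_sum]
        exact Finset.sum_congr rfl fun i _ => by ring


/-- Under the main assumption, for any set `S` of `s` columns, the Gram
matrix `G = A_S^T A_S` has diagonal entries `q` and off-diagonal entries `≤ r-1`;
every (real) eigenvalue of `G` lies in `[q - (s-1)(r-1), q + (s-1)(r-1)]`; and the
column-normalized matrix `A' = (1/√q) A` satisfies the RIP of order `k` with constant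
`δ_k ≤ (k-1)(r-1)/q`. -/
theorem stmt9 {m n q r k s : ℕ} (hq : 0 < q)
    (A : Matrix (Fin m) (Fin n) ℝ)
    (hbin : ∀ i j, A i j = 0 ∨ A i j = 1)
    (hcol : ∀ j : Fin n, (Finset.univ.filter (fun i => A i j = 1)).card = q)
    (hip : ∀ j t : Fin n, j ≠ t → ∑ i, A i j * A i t ≤ ((r - 1 : ℕ) : ℝ))
    (S : Finset (Fin n)) (hS : S.card = s)
    (G : Matrix S S ℝ) (hG : ∀ a b : S, G a b = ∑ i, A i a.1 * A i b.1) :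
    (∀ a : S, G a a = (q : ℝ)) ∧
    (∀ a b : S, a ≠ b → G a b ≤ ((r - 1 : ℕ) : ℝ)) ∧
    (∀ μ : ℝ, (∃ v : S → ℝ, v ≠ 0 ∧ G.mulVec v = μ • v) →
      (q : ℝ) - (((s - 1) * (r - 1) : ℕ) : ℝ) ≤ μ ∧
      μ ≤ (q : ℝ) + (((s - 1) * (r - 1) : ℕ) : ℝ)) ∧
    (∀ u : Fin n → ℝ, (Finset.univ.filter (fun i => u i ≠ 0)).card ≤ k →
      (1 - (((k - 1) * (r - 1) : ℕ) : ℝ) / q) * (∑ i, (u i) ^ 2) ≤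
        ∑ i, ((1 / Real.sqrt q) * A.mulVec u i) ^ 2 ∧
      ∑ i, ((1 / Real.sqrt q) * A.mulVec u i) ^ 2 ≤
        (1 + (((k - 1) * (r - 1) : ℕ) : ℝ) / q) * (∑ i, (u i) ^ 2)) := by
  have hA01 : ∀ i j, 0 ≤ A i j := fun i j => by rcases hbin i j with h | h <;> simp [h]
  have hAsum : ∀ j, ∑ i, A i j * A i j = (q : ℝ) := by
    intro j
    have h1 : ∀ i, A i j * A i j = if A i j = 1 then (1:ℝ) else 0 := by
      intro i; rcases hbin i j with h | h <;> simp [h]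
    rw [Finset.sum_congr rfl fun i _ => h1 i, Finset.sum_boole, hcol j]
  have hGnn : ∀ j t : Fin n, 0 ≤ ∑ i, A i j * A i t := fun j t =>
    Finset.sum_nonneg fun i _ => mul_nonneg (hA01 i j) (hA01 i t)
  -- part 1
  have p1 : ∀ a : S, G a a = (q : ℝ) := fun a => by rw [hG, hAsum]
  -- part 2
  have p2 : ∀ a b : S, a ≠ b → G a b ≤ ((r - 1 : ℕ) : ℝ) := by
    intro a b hab
    rw [hG]
    exact hip a b (fun h => hab (Subtype.ext h))
  refine ⟨p1, p2, ?_, ?_⟩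
  · -- Gershgorin
    rintro μ ⟨v, hv, hev⟩
    obtain ⟨a0, ha0⟩ := Function.ne_iff.mp hv
    simp only [Pi.zero_apply] at ha0
    obtain ⟨a, -, ha⟩ := Finset.exists_max_image (Finset.univ : Finset S) (fun b => |v b|)
      ⟨a0, Finset.mem_univ a0⟩
    have hva : 0 < |v a| := lt_of_lt_of_le (abs_pos.mpr ha0) (ha a0 (Finset.mem_univ a0))
    have heva : ∑ b, G a b * v b = μ * v a := by
      have := congrFun hev a
      simpa [Matrix.mulVec, dotProduct] using this
    have hsplit : (μ - (q : ℝ)) * v a = ∑ b ∈ Finset.univ.erase a, G a b * v b := by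
      have h2 : G a a * v a + ∑ x ∈ Finset.univ.erase a, G a x * v x = μ * v a := by
        rw [← heva]
        simpa using Finset.add_sum_erase Finset.univ (fun b => G a b * v b) (Finset.mem_univ a)
      rw [p1 a] at h2
      linarith
    have hbound : ∀ b ∈ Finset.univ.erase a, |G a b * v b| ≤ ((r - 1 : ℕ) : ℝ) * |v a| := by
      intro b hb
      have hba : b ≠ a := Finset.ne_of_mem_erase hb
      rw [abs_mul]
      have h1 : |G a b| ≤ ((r - 1 : ℕ) : ℝ) := by
        rw [abs_of_nonneg (by rw [hG]; exact hGnn a b)]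
        exact p2 a b (Ne.symm hba)
      exact mul_le_mul h1 (ha b (Finset.mem_univ b)) (abs_nonneg _) (Nat.cast_nonneg _)
    have hcard : (Finset.univ.erase a).card = s - 1 := by
      rw [Finset.card_erase_of_mem (Finset.mem_univ a), Finset.card_univ, Fintype.card_coe, hS]
    have key : |μ - (q : ℝ)| * |v a| ≤ (((s - 1) * (r - 1) : ℕ) : ℝ) * |v a| := by
      rw [← abs_mul, hsplit]
      calc |∑ b ∈ Finset.univ.erase a, G a b * v b|
          ≤ ∑ b ∈ Finset.univ.erase a, |G a b * v b| := Finset.abs_sum_le_sum_abs _ _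
        _ ≤ ∑ _b ∈ Finset.univ.erase a, ((r - 1 : ℕ) : ℝ) * |v a| :=
            Finset.sum_le_sum hbound
        _ = (((s - 1) * (r - 1) : ℕ) : ℝ) * |v a| := by
            rw [Finset.sum_const, hcard, Nat.cast_mul, nsmul_eq_mul]
            ring
    have hfin : |μ - (q : ℝ)| ≤ (((s - 1) * (r - 1) : ℕ) : ℝ) :=
      le_of_mul_le_mul_right key hva
    rw [abs_le] at hfin
    constructor <;> linarith [hfin.1, hfin.2]
  · -- RIP
    intro u hu
    by_cases hu0 : ∀ j, u j = 0
    · have h1 : ∀ i, A.mulVec u i = 0 := by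
        intro i; simp [Matrix.mulVec, dotProduct, hu0]
      simp [h1, hu0]
    · push_neg at hu0
      set T := Finset.univ.filter (fun i => u i ≠ 0) with hT
      set X := ∑ j, (u j)^2 with hX
      have hXnn : 0 ≤ X := Finset.sum_nonneg fun j _ => sq_nonneg _
      have hTne : 1 ≤ T.card := by
        obtain ⟨j, hj⟩ := hu0
        exact Finset.card_pos.mpr ⟨j, by simp [hT, hj]⟩
      have hk1 : 1 ≤ k := le_trans hTne hu
      set C := ∑ j, ∑ l ∈ Finset.univ.erase j, u j * u l * (∑ i, A i j * A i l) with hC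
      have hE : ∑ i, (A.mulVec u i)^2 = (q : ℝ) * X + C := by
        rw [expand_aux]
        have : ∀ j : Fin n, ∑ l, u j * u l * (∑ i, A i j * A i l)
            = u j ^ 2 * q + ∑ l ∈ Finset.univ.erase j, u j * u l * (∑ i, A i j * A i l) := by
          intro j
          rw [← Finset.add_sum_erase Finset.univ _ (Finset.mem_univ j), hAsum]
          ring_nf
        rw [Finset.sum_congr rfl fun j _ => this j, Finset.sum_add_distrib, ← Finset.sum_mul]
        rw [hX, hC]
        ring
      -- bound |C|
      have habs : ∑ l, |u l| = ∑ l ∈ T, |u l| := by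
        symm
        refine Finset.sum_subset (Finset.subset_univ T) fun x _ hx => ?_
        simp [hT] at hx
        simp [hx]
      have hCS : (∑ l, |u l|)^2 ≤ (k : ℝ) * X := by
        rw [habs]
        calc (∑ l ∈ T, |u l|)^2 ≤ T.card * ∑ l ∈ T, |u l|^2 := sq_sum_le_card_mul_sum_sq
          _ ≤ (k : ℝ) * X := by
              refine mul_le_mul (Nat.cast_le.mpr hu) ?_ (Finset.sum_nonneg fun l _ => sq_nonneg _)
                (Nat.cast_nonneg _)
              rw [hX]
              refine le_trans (le_of_eq ?_)
                (Finset.sum_le_sum_of_subset_of_nonneg (Finset.subset_univ T)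
                  fun j _ _ => sq_nonneg _)
              exact Finset.sum_congr rfl fun l _ => by rw [sq_abs]
      have hCbound : |C| ≤ (((k - 1) * (r - 1) : ℕ) : ℝ) * X := by
        have step1 : |C| ≤ ∑ j, ∑ l ∈ Finset.univ.erase j, |u j| * |u l| * ((r - 1 : ℕ) : ℝ) := by
          refine le_trans (Finset.abs_sum_le_sum_abs _ _) (Finset.sum_le_sum fun j _ => ?_)
          refine le_trans (Finset.abs_sum_le_sum_abs _ _) (Finset.sum_le_sum fun l hl => ?_)
          rw [abs_mul, abs_mul, abs_of_nonneg (hGnn j l)]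
          refine mul_le_mul_of_nonneg_left ?_ (mul_nonneg (abs_nonneg _) (abs_nonneg _))
          exact hip j l (Finset.ne_of_mem_erase hl).symm
        have step2 : ∑ j, ∑ l ∈ Finset.univ.erase j, |u j| * |u l| * ((r - 1 : ℕ) : ℝ)
            = ((r - 1 : ℕ) : ℝ) * ((∑ l, |u l|)^2 - X) := by
          have : ∀ j : Fin n, ∑ l ∈ Finset.univ.erase j, |u j| * |u l| * ((r - 1 : ℕ) : ℝ)
              = ((r - 1 : ℕ) : ℝ) * (|u j| * (∑ l, |u l|) - (u j)^2) := by
            intro j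
            rw [← Finset.sum_mul, ← Finset.mul_sum,
              Finset.sum_erase_eq_sub (Finset.mem_univ j)]
            have : |u j| * (∑ l, |u l| - |u j|) = |u j| * (∑ l, |u l|) - (u j)^2 := by
              rw [mul_sub, abs_mul_abs_self, ← pow_two]
            rw [this]; ring
          rw [Finset.sum_congr rfl fun j _ => this j, ← Finset.mul_sum]
          congr 1
          rw [Finset.sum_sub_distrib, ← Finset.sum_mul, sq, hX]
        have step3 : (∑ l, |u l|)^2 - X ≤ (((k - 1) : ℕ) : ℝ) * X := by
          have : ((k - 1 : ℕ) : ℝ) = (k : ℝ) - 1 := by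
            rw [Nat.cast_sub hk1]; norm_num
          rw [this]
          nlinarith [hCS]
        calc |C| ≤ ((r - 1 : ℕ) : ℝ) * ((∑ l, |u l|)^2 - X) := by rw [← step2]; exact step1
          _ ≤ ((r - 1 : ℕ) : ℝ) * ((((k - 1) : ℕ) : ℝ) * X) :=
              mul_le_mul_of_nonneg_left step3 (Nat.cast_nonneg _)
          _ = (((k - 1) * (r - 1) : ℕ) : ℝ) * X := by rw [Nat.cast_mul]; ring
      -- final
      have hq' : (0 : ℝ) < q := Nat.cast_pos.mpr hq
      have hnorm : ∑ i, ((1 / Real.sqrt q) * A.mulVec u i) ^ 2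
          = ((q : ℝ) * X + C) / q := by
        rw [← hE, Finset.sum_div]
        refine Finset.sum_congr rfl fun i _ => ?_
        rw [mul_pow, div_pow, one_pow, Real.sq_sqrt (le_of_lt hq')]
        ring
      rw [hnorm]
      rw [abs_le] at hCbound
      constructor
      · have h1 : (1 - (((k - 1) * (r - 1) : ℕ) : ℝ) / q) * X
            = ((q:ℝ) * X - (((k - 1) * (r - 1) : ℕ) : ℝ) * X) / q := by
          field_simp
        rw [h1, div_le_div_iff_of_pos_right hq']
        linarith [hCbound.1]
      · have h1 : (1 + (((k - 1) * (r - 1) : ℕ) : ℝ) / q) * X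
            = ((q:ℝ) * X + (((k - 1) * (r - 1) : ℕ) : ℝ) * X) / q := by
          field_simp
        rw [h1, div_le_div_iff_of_pos_right hq']
        linarith [hCbound.2]
end

section
/- Let A ∈ {0,1}^{m×n} satisfy the main assumption (columns with exactly q ones, pairwise inner products ≤ r-1) with q > 2k(r-1). Then A gives exact recovery of order k: if x, x' ∈ Σ_k and Ax = Ax', then x = x'. Equivalently, no nonzero 2k-sparse vector lies in the null space of A. -/
open Finset

private lemma stmt10_null {m n q r k : ℕ}
    (A : Matrix (Fin m) (Fin n) ℝ)
    (hbin : ∀ i j, A i j = 0 ∨ A i j = 1)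
    (hcol : ∀ j : Fin n, (Finset.univ.filter (fun i => A i j = 1)).card = q)
    (hip : ∀ j t : Fin n, j ≠ t → ∑ i, A i j * A i t ≤ ((r - 1 : ℕ) : ℝ))
    (hq : 2 * k * (r - 1) < q) :
    ∀ z : Fin n → ℝ,
      (Finset.univ.filter (fun i => z i ≠ 0)).card ≤ 2 * k →
      A.mulVec z = 0 → z = 0 := by
  intro z hz hAz
  by_contra hne
  set T := Finset.univ.filter (fun i => z i ≠ 0) with hT
  have hTne : T.Nonempty := by
    rcases Function.ne_iff.mp hne with ⟨i, hi⟩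
    exact ⟨i, Finset.mem_filter.mpr ⟨Finset.mem_univ i, by simpa using hi⟩⟩
  set R : ℝ := ((r - 1 : ℕ) : ℝ) with hR
  have hR0 : 0 ≤ R := Nat.cast_nonneg _
  set G : Fin n → Fin n → ℝ := fun j t => ∑ i, A i j * A i t with hGdef
  have hG0 : ∀ j t, 0 ≤ G j t := by
    intro j t
    refine Finset.sum_nonneg fun i _ => mul_nonneg ?_ ?_ <;>
      rcases hbin i j with h | h <;> rcases hbin i t with h' | h' <;> simp [h, h']
  have hGd : ∀ j, G j j = q := by
    intro j
    have : G j j = ∑ i, (if A i j = 1 then (1:ℝ) else 0) := by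
      refine Finset.sum_congr rfl fun i _ => ?_
      rcases hbin i j with h | h <;> simp [h]
    rw [this, Finset.sum_boole, ← hcol j]
  -- key identity
  have h0 : ∑ j, ∑ t, z j * z t * G j t = 0 := by
    have key : ∑ j, ∑ t, z j * z t * G j t
        = ∑ i, (A.mulVec z i) * (A.mulVec z i) := by
      calc ∑ j, ∑ t, z j * z t * G j t
          = ∑ j, ∑ t, ∑ i, (A i j * z j) * (A i t * z t) := by
            refine Finset.sum_congr rfl fun j _ => Finset.sum_congr rfl fun t _ => ?_
            rw [hGdef, Finset.mul_sum]
            exact Finset.sum_congr rfl fun i _ => by ring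
        _ = ∑ j, ∑ i, ∑ t, (A i j * z j) * (A i t * z t) :=
            Finset.sum_congr rfl fun j _ => Finset.sum_comm
        _ = ∑ i, ∑ j, ∑ t, (A i j * z j) * (A i t * z t) := Finset.sum_comm
        _ = ∑ i, (∑ j, A i j * z j) * (∑ t, A i t * z t) :=
            Finset.sum_congr rfl fun i _ => (Finset.sum_mul_sum _ _ _ _).symm
        _ = ∑ i, (A.mulVec z i) * (A.mulVec z i) := rfl
    rw [key, hAz]
    simp
  have h1 : ∑ j ∈ T, ∑ t ∈ T, z j * z t * G j t = 0 := by
    rw [← h0]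
    symm
    rw [← Finset.sum_subset (Finset.subset_univ T)]
    · refine Finset.sum_congr rfl fun j hj => ?_
      symm
      refine Finset.sum_subset (Finset.subset_univ T) fun t _ ht => ?_
      have : z t = 0 := by simpa [hT] using ht
      simp [this]
    · intro j _ hj
      have : z j = 0 := by simpa [hT] using hj
      simp [this]
  set s : ℝ := ∑ j ∈ T, (z j)^2 with hs
  have hspos : 0 < s := by
    obtain ⟨j, hj⟩ := hTne
    have hzj : z j ≠ 0 := by simpa [hT] using hj
    refine Finset.sum_pos' (fun i _ => sq_nonneg _) ⟨j, hj, by positivity⟩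
  set B : ℝ := ∑ j ∈ T, |z j| with hB
  have hBsq : B^2 ≤ (T.card : ℝ) * s := by
    have := sq_sum_le_card_mul_sum_sq (s := T) (f := fun j => |z j|)
    simpa [hB, hs, sq_abs] using this
  -- split diagonal
  have hsplit : ∑ j ∈ T, ∑ t ∈ T, z j * z t * G j t
      = (q : ℝ) * s + ∑ j ∈ T, ∑ t ∈ T.erase j, z j * z t * G j t := by
    have : ∀ j ∈ T, ∑ t ∈ T, z j * z t * G j t
        = (z j)^2 * q + ∑ t ∈ T.erase j, z j * z t * G j t := by
      intro j hj
      rw [← Finset.add_sum_erase T _ hj, hGd j]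
      ring_nf
    rw [Finset.sum_congr rfl this, Finset.sum_add_distrib, ← Finset.sum_mul]
    rw [hs]; ring
  -- off-diagonal lower bound
  have hoff : -(R * (B^2 - s)) ≤ ∑ j ∈ T, ∑ t ∈ T.erase j, z j * z t * G j t := by
    have hterm : ∀ j ∈ T, ∀ t ∈ T.erase j,
        -(R * (|z j| * |z t|)) ≤ z j * z t * G j t := by
      intro j hj t ht
      have hjt : t ≠ j := (Finset.mem_erase.mp ht).1
      have hGle : G j t ≤ R := hip j t (Ne.symm hjt)
      have h1 : -(|z j| * |z t|) * G j t ≤ z j * z t * G j t := by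
        apply mul_le_mul_of_nonneg_right _ (hG0 j t)
        rw [← abs_mul]
        exact neg_abs_le _
      have h2 : |z j| * |z t| * G j t ≤ |z j| * |z t| * R :=
        mul_le_mul_of_nonneg_left hGle (by positivity)
      nlinarith
    have hsum : ∑ j ∈ T, ∑ t ∈ T.erase j, -(R * (|z j| * |z t|))
        ≤ ∑ j ∈ T, ∑ t ∈ T.erase j, z j * z t * G j t :=
      Finset.sum_le_sum fun j hj => Finset.sum_le_sum (hterm j hj)
    refine le_trans (le_of_eq ?_) hsum
    have expand : ∑ j ∈ T, ∑ t ∈ T.erase j, |z j| * |z t| = B^2 - s := by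
      have h2 : ∀ j ∈ T, ∑ t ∈ T.erase j, |z j| * |z t| = |z j| * B - |z j|^2 := by
        intro j hj
        rw [← Finset.mul_sum, Finset.sum_erase_eq_sub hj, ← hB]
        ring
      rw [Finset.sum_congr rfl h2, Finset.sum_sub_distrib, ← Finset.sum_mul, ← hB]
      have h3 : ∑ j ∈ T, |z j|^2 = s := by
        rw [hs]; exact Finset.sum_congr rfl fun j _ => sq_abs _
      rw [h3]; ring
    have heq : ∑ j ∈ T, ∑ t ∈ T.erase j, -(R * (|z j| * |z t|))
        = -(R * (B^2 - s)) := by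
      rw [← expand, Finset.mul_sum, ← Finset.sum_neg_distrib]
      refine Finset.sum_congr rfl fun j _ => ?_
      rw [Finset.mul_sum, ← Finset.sum_neg_distrib]
    exact heq.symm
  -- conclude
  rw [hsplit] at h1
  set C : ℝ := ∑ j ∈ T, ∑ t ∈ T.erase j, z j * z t * G j t with hC
  have hTk : (T.card : ℝ) ≤ 2 * k := by exact_mod_cast hz
  have hqR : 2 * (k:ℝ) * R < (q:ℝ) := by rw [hR]; exact_mod_cast hq
  have e1 : R * B^2 ≤ R * ((T.card : ℝ) * s) := mul_le_mul_of_nonneg_left hBsq hR0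
  have e2 : R * ((T.card : ℝ) * s) ≤ R * (2 * k * s) :=
    mul_le_mul_of_nonneg_left (mul_le_mul_of_nonneg_right hTk hspos.le) hR0
  have e3 : 2 * (k:ℝ) * R * s < (q:ℝ) * s := mul_lt_mul_of_pos_right hqR hspos
  have e4 : 0 ≤ R * s := mul_nonneg hR0 hspos.le
  nlinarith [hoff, h1, e1, e2, e3, e4]

/-- Under the main assumption with `q > 2k(r-1)`, `A` gives exact
recovery of order `k`: `k`-sparse vectors with equal measurements are equal;
equivalently, no nonzero `2k`-sparse vector lies in the null space of `A`. -/
theorem stmt10 {m n q r k : ℕ}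
    (A : Matrix (Fin m) (Fin n) ℝ)
    (hbin : ∀ i j, A i j = 0 ∨ A i j = 1)
    (hcol : ∀ j : Fin n, (Finset.univ.filter (fun i => A i j = 1)).card = q)
    (hip : ∀ j t : Fin n, j ≠ t → ∑ i, A i j * A i t ≤ ((r - 1 : ℕ) : ℝ))
    (hq : 2 * k * (r - 1) < q) :
    (∀ x x' : Fin n → ℝ,
      (Finset.univ.filter (fun i => x i ≠ 0)).card ≤ k →
      (Finset.univ.filter (fun i => x' i ≠ 0)).card ≤ k →
      A.mulVec x = A.mulVec x' → x = x') ∧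
    (∀ z : Fin n → ℝ,
      (Finset.univ.filter (fun i => z i ≠ 0)).card ≤ 2 * k →
      A.mulVec z = 0 → z = 0) := by
  have hnull := stmt10_null A hbin hcol hip hq
  refine ⟨?_, hnull⟩
  intro x x' hx hx' hAx
  have hsub : Finset.univ.filter (fun i => x i - x' i ≠ 0)
      ⊆ Finset.univ.filter (fun i => x i ≠ 0) ∪ Finset.univ.filter (fun i => x' i ≠ 0) := by
    intro i hi
    simp only [Finset.mem_filter, Finset.mem_union, Finset.mem_univ, true_and] at *
    by_contra h
    push_neg at h
    exact hi (by rw [h.1, h.2, sub_zero])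
  have hcard : (Finset.univ.filter (fun i => x i - x' i ≠ 0)).card ≤ 2 * k := by
    calc _ ≤ _ := Finset.card_le_card hsub
      _ ≤ _ + _ := Finset.card_union_le _ _
      _ ≤ 2 * k := by omega
  have hAz : A.mulVec (x - x') = 0 := by
    rw [Matrix.mulVec_sub, hAx, sub_self]
  have := hnull (x - x') (by simpa using hcard) hAz
  funext i
  have := congrFun this i
  simp only [Pi.sub_apply, Pi.zero_apply] at this
  linarith
end

section
/- Let A satisfy the main assumption and let S ⊆ [n] be a set of columns with |S| ≤ K. Then the neighborhood N(S) (the set of rows i for which some column j ∈ S has A_{ij} = 1) satisfies |N(S)| ≥ q|S| - (r-1)·|S|(|S|-1)/2 ≥ (1 - (K-1)(r-1)/(2q))·q|S|; hence the bipartite graph with bi-adjacency matrix A is a (K, 1-β)-expander with β = (K-1)(r-1)/(2q), provided β < 1. -/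
open Finset

lemma aux_union {α β : Type*} [DecidableEq α] [DecidableEq β] (N : β → Finset α) (c : ℝ)
    (hc : 0 ≤ c) (h : ∀ j t, j ≠ t → ((N j ∩ N t).card : ℝ) ≤ c) :
    ∀ S : Finset β,
      (∑ j ∈ S, ((N j).card : ℝ)) - c * S.card * (S.card - 1) / 2 ≤ ((S.biUnion N).card : ℝ) := by
  intro S
  induction S using Finset.cons_induction with
  | empty => simp
  | cons a S ha ih =>
    have hsub : N a ∩ S.biUnion N ⊆ S.biUnion (fun j => N a ∩ N j) := by
      intro x hx
      simp only [Finset.mem_inter, Finset.mem_biUnion] at hx ⊢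
      obtain ⟨h1, j, hj, h2⟩ := hx
      exact ⟨j, hj, h1, h2⟩
    have hinter : ((N a ∩ S.biUnion N).card : ℝ) ≤ c * S.card := by
      calc ((N a ∩ S.biUnion N).card : ℝ) ≤ ((S.biUnion (fun j => N a ∩ N j)).card : ℝ) := by
            exact_mod_cast Finset.card_le_card hsub
        _ ≤ ∑ j ∈ S, ((N a ∩ N j).card : ℝ) := by
            exact_mod_cast Finset.card_biUnion_le
        _ ≤ ∑ j ∈ S, c := Finset.sum_le_sum (fun j hj => h a j (by rintro rfl; exact ha hj))
        _ = c * S.card := by rw [Finset.sum_const]; push_cast; ring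
    have hdiff : ((N a).card : ℝ) - c * S.card ≤ (((N a) \ S.biUnion N).card : ℝ) := by
      have h2 : ((N a).card : ℝ) = (((N a) \ S.biUnion N).card : ℝ) + ((N a ∩ S.biUnion N).card : ℝ) := by
        exact_mod_cast (Finset.card_sdiff_add_card_inter (N a) (S.biUnion N)).symm
      linarith
    have hcard : (((N a) \ S.biUnion N).card : ℝ) + ((S.biUnion N).card : ℝ)
        = (((cons a S ha).biUnion N).card : ℝ) := by
      rw [Finset.cons_eq_insert, Finset.biUnion_insert]
      have := Finset.card_sdiff_add_card (N a) (S.biUnion N)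
      exact_mod_cast this
    rw [Finset.sum_cons, Finset.card_cons, ← hcard]
    push_cast
    nlinarith [ih, (Nat.cast_nonneg S.card : (0:ℝ) ≤ S.card)]

/-- Under the main assumption, for any set `S` of at most `K` columns, the
neighborhood `N(S)` of rows satisfies
`|N(S)| ≥ q|S| - (r-1)|S|(|S|-1)/2 ≥ (1 - (K-1)(r-1)/(2q)) · q|S|`; hence the bipartite
graph with bi-adjacency matrix `A` is a `(K, 1-β)`-expander with
`β = (K-1)(r-1)/(2q)`, provided `β < 1`. -/
theorem stmt13 {m n q r K : ℕ} (hq : 0 < q)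
    (A : Matrix (Fin m) (Fin n) ℝ)
    (hbin : ∀ i j, A i j = 0 ∨ A i j = 1)
    (hcol : ∀ j : Fin n, (Finset.univ.filter (fun i => A i j = 1)).card = q)
    (hip : ∀ j t : Fin n, j ≠ t → ∑ i, A i j * A i t ≤ ((r - 1 : ℕ) : ℝ))
    (hβ : (((K - 1) * (r - 1) : ℕ) : ℝ) / (2 * q) < 1) :
    ∀ S : Finset (Fin n), S.card ≤ K →
      ((q : ℝ) * S.card - ((r - 1 : ℕ) : ℝ) * S.card * (S.card - 1) / 2 ≤
        ((@Finset.filter _ (fun i : Fin m => ∃ j ∈ S, A i j = 1) (fun _ => Finset.decidableExistsAndFinset) Finset.univ).card : ℝ)) ∧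
      ((1 - (((K - 1) * (r - 1) : ℕ) : ℝ) / (2 * q)) * ((q : ℝ) * S.card) ≤
        ((@Finset.filter _ (fun i : Fin m => ∃ j ∈ S, A i j = 1) (fun _ => Finset.decidableExistsAndFinset) Finset.univ).card : ℝ)) := by
  intro S hS
  set N : Fin n → Finset (Fin m) := fun j => Finset.univ.filter (fun i => A i j = 1) with hN
  have hNset : @Finset.filter _ (fun i : Fin m => ∃ j ∈ S, A i j = 1) (fun _ => Finset.decidableExistsAndFinset) Finset.univ = S.biUnion N := by
    ext i; simp [hN]
  have key : ∀ j t : Fin n, ((N j ∩ N t).card : ℝ) = ∑ i, A i j * A i t := by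
    intro j t
    have h1 : N j ∩ N t = Finset.univ.filter (fun i => A i j = 1 ∧ A i t = 1) := by
      ext i; simp [hN]
    rw [h1, ← Finset.sum_boole]
    refine Finset.sum_congr rfl (fun i _ => ?_)
    rcases hbin i j with h | h <;> rcases hbin i t with h' | h' <;> simp [h, h']
  have hinter : ∀ j t : Fin n, j ≠ t → ((N j ∩ N t).card : ℝ) ≤ ((r - 1 : ℕ) : ℝ) := by
    intro j t hjt; rw [key]; exact hip j t hjt
  have hmain := aux_union N ((r - 1 : ℕ) : ℝ) (Nat.cast_nonneg _) hinter S
  have hsum : (∑ j ∈ S, ((N j).card : ℝ)) = (q : ℝ) * S.card := by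
    simp [hN, hcol, mul_comm]
  rw [hNset]
  have first : (q : ℝ) * S.card - ((r - 1 : ℕ) : ℝ) * S.card * (S.card - 1) / 2 ≤
      ((S.biUnion N).card : ℝ) := by rw [← hsum]; exact hmain
  refine ⟨first, le_trans ?_ first⟩
  -- second inequality
  rcases Nat.eq_zero_or_pos S.card with h0 | h0
  · simp [h0]
  · have hle : (((r - 1 : ℕ)) * (S.card - 1) : ℕ) ≤ ((K - 1) * (r - 1) : ℕ) := by
      rw [Nat.mul_comm]
      exact Nat.mul_le_mul_right _ (Nat.sub_le_sub_right hS 1)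
    have hcast : ((r - 1 : ℕ) : ℝ) * ((S.card : ℝ) - 1) ≤ (((K - 1) * (r - 1) : ℕ) : ℝ) := by
      have : ((S.card : ℝ) - 1) = ((S.card - 1 : ℕ) : ℝ) := by
        rw [Nat.cast_sub h0]; norm_num
      rw [this, ← Nat.cast_mul]
      exact_mod_cast hle
    have hq' : (0:ℝ) < q := by exact_mod_cast hq
    have hs0 : (0:ℝ) ≤ (S.card : ℝ) := Nat.cast_nonneg _
    have expand : (1 - (((K - 1) * (r - 1) : ℕ) : ℝ) / (2 * q)) * ((q : ℝ) * S.card)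
        = (q:ℝ) * S.card - (((K - 1) * (r - 1) : ℕ) : ℝ) * S.card / 2 := by
      field_simp
    rw [expand]
    nlinarith [mul_le_mul_of_nonneg_right hcast hs0]
end

section
/- Let A ∈ {0,1}^{m×n} satisfy the main assumption with q > 2(k(r-1) + M). If x, x' ∈ Σ_k and η, η' ∈ R^m each have at most M nonzero entries, and Ax + η = Ax' + η', then x = x'. That is, k-sparse vectors are uniquely determined by measurements corrupted in at most M positions. -/
open Finset

/-- Under the main assumption with `q > 2(k(r-1)+M)`, `k`-sparse vectors
are uniquely determined by measurements corrupted in at most `M` positions: if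
`x, x' ∈ Σ_k`, `‖η‖₀, ‖η'‖₀ ≤ M` and `Ax + η = Ax' + η'`, then `x = x'`. -/
theorem stmt17 {m n q r k M : ℕ}
    (A : Matrix (Fin m) (Fin n) ℝ)
    (hbin : ∀ i j, A i j = 0 ∨ A i j = 1)
    (hcol : ∀ j : Fin n, (Finset.univ.filter (fun i => A i j = 1)).card = q)
    (hip : ∀ j t : Fin n, j ≠ t → ∑ i, A i j * A i t ≤ ((r - 1 : ℕ) : ℝ))
    (hq : 2 * (k * (r - 1) + M) < q)
    (x x' : Fin n → ℝ)
    (hx : (Finset.univ.filter (fun i => x i ≠ 0)).card ≤ k)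
    (hx' : (Finset.univ.filter (fun i => x' i ≠ 0)).card ≤ k)
    (η η' : Fin m → ℝ)
    (hη : (Finset.univ.filter (fun i => η i ≠ 0)).card ≤ M)
    (hη' : (Finset.univ.filter (fun i => η' i ≠ 0)).card ≤ M)
    (heq : A.mulVec x + η = A.mulVec x' + η') :
    x = x' := by
  by_contra hne
  set z : Fin n → ℝ := fun i => x i - x' i with hz
  -- support of z
  set S : Finset (Fin n) := Finset.univ.filter (fun i => z i ≠ 0) with hS
  have hScard : S.card ≤ 2 * k := by
    have hsub : S ⊆ (Finset.univ.filter (fun i => x i ≠ 0)) ∪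
        (Finset.univ.filter (fun i => x' i ≠ 0)) := by
      intro i hi
      simp only [hS, mem_filter, mem_union, mem_univ, true_and] at *
      by_contra h
      push_neg at h
      simp only [show z i = x i - x' i from rfl, h.1, h.2, sub_zero] at hi
      exact hi rfl
    calc S.card ≤ _ := card_le_card hsub
      _ ≤ _ := card_union_le _ _
      _ ≤ 2 * k := by omega
  obtain ⟨j, hj⟩ : ∃ j, z j ≠ 0 := by
    by_contra h
    push_neg at h
    exact hne (funext fun i => by have := h i; simp [hz, sub_eq_zero] at this; exact this)
  set S' : Finset (Fin n) := S.erase j with hS'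
  have hS'card : S'.card ≤ 2 * k := le_trans (card_le_card (erase_subset _ _)) hScard
  -- rows supporting column j
  set T : Finset (Fin m) := Finset.univ.filter (fun i => A i j = 1) with hT
  -- the bad rows
  classical
  set B1 : Finset (Fin m) := Finset.univ.filter (fun i => ∃ t ∈ S', A i t = 1) with hB1
  set B2 : Finset (Fin m) := Finset.univ.filter (fun i => η i ≠ 0) with hB2
  set B3 : Finset (Fin m) := Finset.univ.filter (fun i => η' i ≠ 0) with hB3
  -- overlap count for each t
  have hover : ∀ t ∈ S', (Finset.univ.filter (fun i => A i j = 1 ∧ A i t = 1)).card ≤ r - 1 := by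
    intro t ht
    have htj : j ≠ t := fun h => (mem_erase.mp ht).1 h.symm
    have hsum : (∑ i, A i j * A i t) =
        ((Finset.univ.filter (fun i => A i j = 1 ∧ A i t = 1)).card : ℝ) := by
      rw [← Finset.sum_filter_add_sum_filter_not Finset.univ (fun i => A i j = 1 ∧ A i t = 1)]
      have h1 : ∀ i ∈ Finset.univ.filter (fun i => A i j = 1 ∧ A i t = 1),
          A i j * A i t = 1 := by
        intro i hi
        simp only [mem_filter] at hi
        rw [hi.2.1, hi.2.2, mul_one]
      have h2 : ∀ i ∈ Finset.univ.filter (fun i => ¬(A i j = 1 ∧ A i t = 1)),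
          A i j * A i t = 0 := by
        intro i hi
        simp only [mem_filter] at hi
        rcases hbin i j with h | h
        · rw [h, zero_mul]
        · rcases hbin i t with h' | h'
          · rw [h', mul_zero]
          · exact absurd ⟨h, h'⟩ hi.2
      rw [Finset.sum_congr rfl h1, Finset.sum_congr rfl h2, Finset.sum_const,
        Finset.sum_const, nsmul_eq_mul, nsmul_eq_mul, mul_one, mul_zero, add_zero]
    have := hip j t htj
    rw [hsum] at this
    exact_mod_cast this
  have hB1card : (B1 ∩ T).card ≤ 2 * (k * (r - 1)) := by
    have hsub : B1 ∩ T ⊆ S'.biUnion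
        (fun t => Finset.univ.filter (fun i => A i j = 1 ∧ A i t = 1)) := by
      intro i hi
      simp only [hB1, hT, mem_inter, mem_filter, mem_univ, true_and] at hi
      obtain ⟨⟨t, ht, hAt⟩, hAj⟩ := hi
      exact mem_biUnion.mpr ⟨t, ht, by simp [hAj, hAt]⟩
    calc (B1 ∩ T).card ≤ _ := card_le_card hsub
      _ ≤ ∑ t ∈ S', (Finset.univ.filter (fun i => A i j = 1 ∧ A i t = 1)).card :=
        card_biUnion_le
      _ ≤ ∑ _t ∈ S', (r - 1) := Finset.sum_le_sum hover
      _ = S'.card * (r - 1) := by rw [Finset.sum_const, smul_eq_mul]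
      _ ≤ 2 * k * (r - 1) := Nat.mul_le_mul_right _ hS'card
      _ = 2 * (k * (r - 1)) := mul_assoc 2 k (r - 1)
  -- there is a good row
  have hgood : ∃ i ∈ T, i ∉ B1 ∧ i ∉ B2 ∧ i ∉ B3 := by
    by_contra h
    push_neg at h
    have hsub : T ⊆ (B1 ∩ T) ∪ B2 ∪ B3 := by
      intro i hi
      rcases Decidable.em (i ∈ B1) with h1 | h1
      · exact mem_union.mpr (Or.inl (mem_union.mpr (Or.inl (mem_inter.mpr ⟨h1, hi⟩))))
      rcases Decidable.em (i ∈ B2) with h2 | h2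
      · exact mem_union.mpr (Or.inl (mem_union.mpr (Or.inr h2)))
      rcases Decidable.em (i ∈ B3) with h3 | h3
      · exact mem_union.mpr (Or.inr h3)
      exact absurd h3 (not_not.mpr (h i hi h1 h2))
    have hc : T.card ≤ (B1 ∩ T).card + B2.card + B3.card :=
      le_trans (card_le_card hsub)
        (le_trans (card_union_le _ _) (Nat.add_le_add_right (card_union_le _ _) _))
    have hTq : T.card = q := by rw [hT]; exact hcol j
    rw [hTq] at hc
    have hB2c : B2.card ≤ M := hη
    have hB3c : B3.card ≤ M := hη'
    omega
  obtain ⟨i, hiT, hiB1, hiB2, hiB3⟩ := hgood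
  simp only [hT, mem_filter, mem_univ, true_and] at hiT
  simp only [hB1, mem_filter, mem_univ, true_and, not_exists, not_and] at hiB1
  simp only [hB2, mem_filter, mem_univ, true_and, not_not] at hiB2
  simp only [hB3, mem_filter, mem_univ, true_and, not_not] at hiB3
  -- evaluate row i of the equation
  have hrow := congrFun heq i
  simp only [Pi.add_apply, Matrix.mulVec, dotProduct] at hrow
  rw [hiB2, hiB3, add_zero, add_zero] at hrow
  have hzero : ∑ t, A i t * z t = 0 := by
    simp only [hz, mul_sub, Finset.sum_sub_distrib, hrow, sub_self]
  have hsingle : ∑ t, A i t * z t = z j := by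
    rw [Finset.sum_eq_single j]
    · rw [hiT, one_mul]
    · intro t _ htj
      rcases Decidable.em (z t = 0) with h0 | h0
      · rw [h0, mul_zero]
      · have htS' : t ∈ S' := by
          simp only [hS', hS, mem_erase, mem_filter, mem_univ, true_and]
          exact ⟨htj, h0⟩
        have := hiB1 t htS'
        rcases hbin i t with h | h
        · rw [h, zero_mul]
        · exact absurd h this
    · intro h
      exact absurd (Finset.mem_univ j) h
  rw [hsingle] at hzero
  exact hj hzero
end
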